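/- arXiv:1301.1256 — 4 statements merged into one kernel-verified Lean document; each statement's English description precedes it below -/
import Mathlib

section
/- Let 0 ≤ e ≤ 1/2 and let g be any graphon with e(g) = e and t(g) = 0. Then I(g) ≥ I₀(2e)/2. -/
open MeasureTheory Real Set Filter

noncomputable section

/-- `I₀(u) = (1/2)[u ln u + (1-u) ln(1-u)]`, with the convention `log 0 = 0`
    giving `I₀(0) = I₀(1) = 0`. -/
def I0 (u : ℝ) : ℝ := (u * Real.log u + (1 - u) * Real.log (1 - u)) / 2

/-- `I₀'(u) = (1/2)[ln u − ln(1−u)]`. -/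
def I0d (u : ℝ) : ℝ := (Real.log u - Real.log (1 - u)) / 2

/-- `I₀''(u) = (1/2)[1/u + 1/(1−u)]`. -/
def I0dd (u : ℝ) : ℝ := (1 / u + 1 / (1 - u)) / 2

/-- A graphon: a measurable, symmetric function `[0,1]² → [0,1]`
    (here defined on all of `ℝ²`, with values used only on `[0,1]²`). -/
def IsGraphon (g : ℝ → ℝ → ℝ) : Prop :=
  Measurable (Function.uncurry g) ∧ (∀ x y, g x y = g y x) ∧ ∀ x y, g x y ∈ Icc (0 : ℝ) 1

/-- The edge density `e(g) = ∫₀¹∫₀¹ g(x,y) dx dy`. -/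
def edgeDensity (g : ℝ → ℝ → ℝ) : ℝ :=
  ∫ x in Icc (0 : ℝ) 1, ∫ y in Icc (0 : ℝ) 1, g x y

/-- The triangle density `t(g) = ∫₀¹∫₀¹∫₀¹ g(x,y) g(y,z) g(z,x) dx dy dz`. -/
def triangleDensity (g : ℝ → ℝ → ℝ) : ℝ :=
  ∫ x in Icc (0 : ℝ) 1, ∫ y in Icc (0 : ℝ) 1, ∫ z in Icc (0 : ℝ) 1, g x y * g y z * g z x

/-- The rate function `I(g) = ∫₀¹∫₀¹ I₀(g(x,y)) dx dy`. -/
def rate (g : ℝ → ℝ → ℝ) : ℝ :=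
  ∫ x in Icc (0 : ℝ) 1, ∫ y in Icc (0 : ℝ) 1, I0 (g x y)

/-- Lebesgue measure restricted to `[0,1]`. -/
def unitMeasure : Measure ℝ := volume.restrict (Icc (0 : ℝ) 1)

/-- Two graphons are equivalent if they agree a.e. after composing with
    measure-preserving maps of `[0,1]`. -/
def GraphonEquiv (f g : ℝ → ℝ → ℝ) : Prop :=
  ∃ σ σ' : ℝ → ℝ, MeasurePreserving σ unitMeasure unitMeasure ∧
    MeasurePreserving σ' unitMeasure unitMeasure ∧
    ∀ᵐ p ∂(unitMeasure.prod unitMeasure), f (σ p.1) (σ p.2) = g (σ' p.1) (σ' p.2)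

end


noncomputable section AuxProof

instance : IsProbabilityMeasure unitMeasure := by
  constructor; simp [unitMeasure]

lemma integrable_bdd {α : Type*} [MeasurableSpace α] {μ : Measure α} [IsFiniteMeasure μ]
    {F : α → ℝ} (hF : Measurable F) {C : ℝ} (hC : ∀ x, |F x| ≤ C) :
    Integrable F μ :=
  Integrable.mono' (integrable_const C) hF.aestronglyMeasurable (ae_of_all _ hC)

lemma abs_int_le {α : Type*} [MeasurableSpace α] {μ : Measure α} [IsProbabilityMeasure μ]
    {f : α → ℝ} {C : ℝ} (h : ∀ x, |f x| ≤ C) : |∫ x, f x ∂μ| ≤ C := by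
  have := norm_integral_le_of_norm_le_const (μ := μ) (f := f) (C := C) (ae_of_all _ h)
  simpa using this

def bf (g : ℝ → ℝ → ℝ) : ℝ × ℝ → ℝ := fun p => if 0 < g p.1 p.2 then 1 else 0

def deg (g : ℝ → ℝ → ℝ) : ℝ → ℝ := fun x => ∫ y, bf g (x, y) ∂unitMeasure

section WithGraphon

variable {g : ℝ → ℝ → ℝ}

lemma bf_mes (hg : IsGraphon g) : Measurable (bf g) := by
  have : MeasurableSet {p : ℝ × ℝ | 0 < g p.1 p.2} :=
    measurableSet_lt measurable_const hg.1
  exact Measurable.ite this measurable_const measurable_const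

lemma bf_mem (p : ℝ × ℝ) : bf g p = 0 ∨ bf g p = 1 := by
  unfold bf; split <;> simp

lemma bf_nonneg (p : ℝ × ℝ) : 0 ≤ bf g p := by
  rcases bf_mem (g := g) p with h | h <;> rw [h] <;> norm_num

lemma bf_le_one (p : ℝ × ℝ) : bf g p ≤ 1 := by
  rcases bf_mem (g := g) p with h | h <;> rw [h] <;> norm_num

lemma bf_abs_le (p : ℝ × ℝ) : |bf g p| ≤ 1 := by
  rw [abs_of_nonneg (bf_nonneg p)]; exact bf_le_one p

lemma bf_symm (hg : IsGraphon g) (x y : ℝ) : bf g (x, y) = bf g (y, x) := by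
  unfold bf; simp only [hg.2.1 x y]

lemma g_le_bf (hg : IsGraphon g) (p : ℝ × ℝ) : g p.1 p.2 ≤ bf g p := by
  unfold bf; split
  · exact (hg.2.2 p.1 p.2).2
  · next h => linarith [(hg.2.2 p.1 p.2).1]

lemma bf_mul_g (hg : IsGraphon g) (p : ℝ × ℝ) : bf g p * g p.1 p.2 = g p.1 p.2 := by
  unfold bf; split
  · ring
  · next h =>
    have h0 := (hg.2.2 p.1 p.2).1
    have : g p.1 p.2 = 0 := le_antisymm (not_lt.mp h) h0
    rw [this]; ring

lemma deg_mes (hg : IsGraphon g) : Measurable (deg g) :=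
  (StronglyMeasurable.integral_prod_right'
    (f := bf g) (bf_mes hg).stronglyMeasurable).measurable

lemma deg_nonneg (x : ℝ) : 0 ≤ deg g x :=
  integral_nonneg fun y => bf_nonneg (g := g) (x, y)

lemma deg_abs_le (x : ℝ) : |deg g x| ≤ 1 :=
  abs_int_le fun y => bf_abs_le (g := g) (x, y)

lemma iint_eq (F : ℝ × ℝ → ℝ) (hF : Measurable F) {C : ℝ} (hb : ∀ p, |F p| ≤ C) :
    ∫ x, ∫ y, F (x, y) ∂unitMeasure ∂unitMeasure
      = ∫ p, F p ∂(unitMeasure.prod unitMeasure) :=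
  integral_integral (f := fun x y => F (x, y)) (integrable_bdd hF hb)

lemma abs_mul3_le_one {a b c : ℝ} (ha : a ∈ Icc (0:ℝ) 1) (hb : b ∈ Icc (0:ℝ) 1)
    (hc : c ∈ Icc (0:ℝ) 1) : |a * b * c| ≤ 1 := by
  rw [abs_mul, abs_mul, abs_of_nonneg ha.1, abs_of_nonneg hb.1, abs_of_nonneg hc.1]
  calc a * b * c ≤ 1 * 1 * 1 := by
        apply mul_le_mul (mul_le_mul ha.2 hb.2 hb.1 zero_le_one) hc.2 hc.1
        norm_num
  _ = 1 := by norm_num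

lemma bf_Icc (p : ℝ × ℝ) : bf g p ∈ Icc (0:ℝ) 1 := ⟨bf_nonneg p, bf_le_one p⟩

lemma mantel (hg : IsGraphon g) (hgt : triangleDensity g = 0) :
    ∫ p, bf g p ∂(unitMeasure.prod unitMeasure) ≤ 1 / 2 := by
  obtain ⟨hmg, hsym, hrange⟩ := id hg
  set ν := unitMeasure with hν
  set μ2 := unitMeasure.prod unitMeasure with hμ2
  -- the triangle kernels
  set K : (ℝ × ℝ) × ℝ → ℝ := fun q => g q.1.1 q.1.2 * g q.1.2 q.2 * g q.2 q.1.1 with hK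
  set Kb : (ℝ × ℝ) × ℝ → ℝ :=
    fun q => bf g q.1 * (bf g (q.1.2, q.2) * bf g (q.2, q.1.1)) with hKb
  have mK : Measurable K := by
    apply Measurable.mul
    apply Measurable.mul
    · exact hmg.comp measurable_fst
    · exact hmg.comp ((measurable_snd.comp measurable_fst).prodMk measurable_snd)
    · exact hmg.comp (measurable_snd.prodMk (measurable_fst.comp measurable_fst))
  have mKb : Measurable Kb := by
    apply Measurable.mul
    · exact (bf_mes hg).comp measurable_fst
    apply Measurable.mul
    · exact (bf_mes hg).comp
        (((measurable_snd.comp measurable_fst).prodMk measurable_snd))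
    · exact (bf_mes hg).comp
        ((measurable_snd.prodMk (measurable_fst.comp measurable_fst)))
  have bK : ∀ q, |K q| ≤ 1 := fun q =>
    abs_mul3_le_one (hrange _ _) (hrange _ _) (hrange _ _)
  have bKb : ∀ q, |Kb q| ≤ 1 := fun q => by
    show |bf g q.1 * (bf g (q.1.2, q.2) * bf g (q.2, q.1.1))| ≤ 1
    rw [show bf g q.1 * (bf g (q.1.2, q.2) * bf g (q.2, q.1.1))
        = bf g q.1 * bf g (q.1.2, q.2) * bf g (q.2, q.1.1) by ring]
    exact abs_mul3_le_one (bf_Icc _) (bf_Icc _) (bf_Icc _)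
  have nnK : ∀ q, 0 ≤ K q := fun q =>
    mul_nonneg (mul_nonneg (hrange _ _).1 (hrange _ _).1) (hrange _ _).1
  -- inner integral function is measurable & bounded
  have mKi : Measurable fun p : ℝ × ℝ => ∫ z, K (p, z) ∂ν :=
    (StronglyMeasurable.integral_prod_right' (f := K) mK.stronglyMeasurable).measurable
  have bKi : ∀ p : ℝ × ℝ, |∫ z, K (p, z) ∂ν| ≤ 1 := fun p => abs_int_le fun z => bK (p, z)
  -- step 1 : triangle density as an integral over the triple product
  have h1 : triangleDensity g = ∫ p, (∫ z, K (p, z) ∂ν) ∂μ2 := by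
    rw [triangleDensity]
    exact iint_eq (fun p => ∫ z, K (p, z) ∂ν) mKi bKi
  have h2 : ∫ p, (∫ z, K (p, z) ∂ν) ∂μ2 = ∫ q, K q ∂(μ2.prod ν) :=
    integral_integral (f := fun p z => K (p, z)) (integrable_bdd mK bK)
  have hT : ∫ q, K q ∂(μ2.prod ν) = 0 := by rw [← h2, ← h1]; exact hgt
  -- step 2 : K vanishes a.e.
  have hK0 : K =ᵐ[μ2.prod ν] 0 :=
    (integral_eq_zero_iff_of_nonneg nnK (integrable_bdd mK bK)).mp hT
  -- step 3 : Kb vanishes a.e.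
  have hKb0 : Kb =ᵐ[μ2.prod ν] 0 := by
    filter_upwards [hK0] with q hq
    have hq' : g q.1.1 q.1.2 * g q.1.2 q.2 * g q.2 q.1.1 = 0 := hq
    simp only [Pi.zero_apply]
    rcases mul_eq_zero.mp hq' with h | h
    · rcases mul_eq_zero.mp h with h' | h'
      · have : bf g q.1 = 0 := by unfold bf; simp [h']
        rw [hKb]; simp only [this, zero_mul]
      · have : bf g (q.1.2, q.2) = 0 := by unfold bf; simp [h']
        rw [hKb]; simp only [this, zero_mul, mul_zero]
    · have : bf g (q.2, q.1.1) = 0 := by unfold bf; simp [h]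
      rw [hKb]; simp only [this, mul_zero]
  -- step 4 : the key quantity A is zero
  set w : ℝ × ℝ → ℝ := fun p => ∫ z, bf g (p.2, z) * bf g (z, p.1) ∂ν with hw
  have hKbint : ∫ q, Kb q ∂(μ2.prod ν) = 0 := integral_eq_zero_of_ae hKb0
  have h3 : ∫ p, (∫ z, Kb (p, z) ∂ν) ∂μ2 = ∫ q, Kb q ∂(μ2.prod ν) :=
    integral_integral (f := fun p z => Kb (p, z)) (integrable_bdd mKb bKb)
  have hinn : ∀ p : ℝ × ℝ, (∫ z, Kb (p, z) ∂ν) = bf g p * w p := fun p => by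
    show (∫ z, bf g p * (bf g (p.2, z) * bf g (z, p.1)) ∂ν) = _
    rw [integral_const_mul]
  have hA : ∫ p, bf g p * w p ∂μ2 = 0 := by
    rw [show (fun p : ℝ × ℝ => bf g p * w p) = fun p => ∫ z, Kb (p, z) ∂ν from
      funext fun p => (hinn p).symm]
    rw [h3]; exact hKbint
  -- measurability/bounds for w
  have mw : Measurable w := by
    apply StronglyMeasurable.measurable
    apply StronglyMeasurable.integral_prod_right'
      (f := fun q : (ℝ × ℝ) × ℝ => bf g (q.1.2, q.2) * bf g (q.2, q.1.1))
    exact (((bf_mes hg).comp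
        ((measurable_snd.comp measurable_fst).prodMk measurable_snd)).mul
      ((bf_mes hg).comp
        (measurable_snd.prodMk (measurable_fst.comp measurable_fst)))).stronglyMeasurable
  have bw : ∀ p, |w p| ≤ 1 := fun p => abs_int_le fun z => by
    rw [show bf g (p.2, z) * bf g (z, p.1) = bf g (p.2, z) * bf g (z, p.1) * 1 by ring]
    exact abs_mul3_le_one (bf_Icc _) (bf_Icc _) (by norm_num)
  have wnn : ∀ p, 0 ≤ w p := fun p =>
    integral_nonneg fun z => mul_nonneg (bf_nonneg _) (bf_nonneg _)
  -- step 5 : pointwise inequality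
  have hpt : ∀ p : ℝ × ℝ, bf g p * (deg g p.1 + deg g p.2) ≤ bf g p + bf g p * w p := by
    intro p
    have ibz1 : Integrable (fun z => bf g (p.1, z)) ν :=
      integrable_bdd ((bf_mes hg).comp (measurable_const.prodMk measurable_id))
        (fun z => bf_abs_le _)
    have ibz2 : Integrable (fun z => bf g (p.2, z)) ν :=
      integrable_bdd ((bf_mes hg).comp (measurable_const.prodMk measurable_id))
        (fun z => bf_abs_le _)
    have ibz3 : Integrable (fun z => bf g (p.2, z) * bf g (z, p.1)) ν :=
      integrable_bdd
        (((bf_mes hg).comp (measurable_const.prodMk measurable_id)).mul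
          ((bf_mes hg).comp (measurable_id.prodMk measurable_const)))
        (fun z => by
          rw [show bf g (p.2, z) * bf g (z, p.1) = bf g (p.2, z) * bf g (z, p.1) * 1 by ring]
          exact abs_mul3_le_one (bf_Icc _) (bf_Icc _) (by norm_num))
    by_cases hb : 0 < g p.1 p.2
    · have h1 : bf g p = 1 := by unfold bf; rw [if_pos hb]
      rw [h1, one_mul, one_mul]
      have e1 : deg g p.1 + deg g p.2 = ∫ z, (bf g (p.1, z) + bf g (p.2, z)) ∂ν :=
        (integral_add ibz1 ibz2).symm
      have e2 : (∫ z, (bf g (p.1, z) + bf g (p.2, z)) ∂ν)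
          ≤ ∫ z, (1 + bf g (p.2, z) * bf g (z, p.1)) ∂ν := by
        apply integral_mono (ibz1.add ibz2) ((integrable_const 1).add ibz3)
        intro z
        show bf g (p.1, z) + bf g (p.2, z) ≤ 1 + bf g (p.2, z) * bf g (z, p.1)
        have hsymz : bf g (z, p.1) = bf g (p.1, z) := bf_symm hg _ _
        rw [hsymz]
        rcases bf_mem (g := g) (p.1, z) with h | h <;>
          rcases bf_mem (g := g) (p.2, z) with h' | h' <;>
          simp only [h, h'] <;> norm_num
      have e3 : (∫ z, (1 + bf g (p.2, z) * bf g (z, p.1)) ∂ν) = 1 + w p := by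
        rw [integral_add (integrable_const 1) ibz3]
        simp [hw]
      rw [e1]; rw [e3] at e2; exact e2
    · have h1 : bf g p = 0 := by unfold bf; rw [if_neg hb]
      rw [h1]; simp
  -- integrability on μ2
  have mdeg := deg_mes hg
  have ibf : Integrable (bf g) μ2 := integrable_bdd (bf_mes hg) bf_abs_le
  have ib1 : Integrable (fun p : ℝ × ℝ => bf g p * deg g p.1) μ2 :=
    integrable_bdd ((bf_mes hg).mul (mdeg.comp measurable_fst))
      (fun p => by
        rw [abs_mul]
        calc |bf g p| * |deg g p.1| ≤ 1 * 1 :=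
          mul_le_mul (bf_abs_le _) (deg_abs_le _) (abs_nonneg _) zero_le_one
        _ = 1 := by norm_num)
  have ib2 : Integrable (fun p : ℝ × ℝ => bf g p * deg g p.2) μ2 :=
    integrable_bdd ((bf_mes hg).mul (mdeg.comp measurable_snd))
      (fun p => by
        rw [abs_mul]
        calc |bf g p| * |deg g p.2| ≤ 1 * 1 :=
          mul_le_mul (bf_abs_le _) (deg_abs_le _) (abs_nonneg _) zero_le_one
        _ = 1 := by norm_num)
  have ibw : Integrable (fun p : ℝ × ℝ => bf g p * w p) μ2 :=
    integrable_bdd ((bf_mes hg).mul mw)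
      (fun p => by
        rw [abs_mul]
        calc |bf g p| * |w p| ≤ 1 * 1 :=
          mul_le_mul (bf_abs_le _) (bw _) (abs_nonneg _) zero_le_one
        _ = 1 := by norm_num)
  -- step 6 : integrate
  set m := ∫ p, bf g p ∂μ2 with hm
  have hI1 : (∫ p, bf g p * deg g p.1 ∂μ2) + ∫ p, bf g p * deg g p.2 ∂μ2 ≤ m := by
    have hmono : (∫ p, (bf g p * deg g p.1 + bf g p * deg g p.2) ∂μ2)
        ≤ ∫ p, (bf g p + bf g p * w p) ∂μ2 := by
      apply integral_mono (by exact ib1.add ib2) (by exact ibf.add ibw)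
      intro p
      have h := hpt p
      rw [mul_add] at h
      exact h
    rw [integral_add ib1 ib2, integral_add ibf ibw, hA, add_zero] at hmono
    exact hmono
  -- step 7 : both pieces equal ∫ deg²
  set S := ∫ x, deg g x * deg g x ∂ν with hS
  have hfst : (∫ p, bf g p * deg g p.1 ∂μ2) = S := by
    rw [← iint_eq (fun p => bf g p * deg g p.1)
      ((bf_mes hg).mul (mdeg.comp measurable_fst))
      (C := 1)
      (fun p => by
        rw [abs_mul]
        calc |bf g p| * |deg g p.1| ≤ 1 * 1 :=
          mul_le_mul (bf_abs_le _) (deg_abs_le _) (abs_nonneg _) zero_le_one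
        _ = 1 := by norm_num)]
    apply integral_congr_ae (ae_of_all _ _)
    intro x
    rw [show (fun y => bf g (x, y) * deg g x) = fun y => deg g x * bf g (x, y) from
      funext fun y => mul_comm _ _]
    rw [integral_const_mul]
    rfl
  have hsnd : (∫ p, bf g p * deg g p.2 ∂μ2) = S := by
    rw [← iint_eq (fun p => bf g p * deg g p.2)
      ((bf_mes hg).mul (mdeg.comp measurable_snd))
      (C := 1)
      (fun p => by
        rw [abs_mul]
        calc |bf g p| * |deg g p.2| ≤ 1 * 1 :=
          mul_le_mul (bf_abs_le _) (deg_abs_le _) (abs_nonneg _) zero_le_one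
        _ = 1 := by norm_num)]
    rw [integral_integral_swap (f := fun x y => bf g (x, y) * deg g y)
      (integrable_bdd (μ := μ2) ((bf_mes hg).mul (mdeg.comp measurable_snd)) (C := 1)
        (fun p => by
          show |bf g p * deg g p.2| ≤ 1
          rw [abs_mul]
          calc |bf g p| * |deg g p.2| ≤ 1 * 1 :=
            mul_le_mul (bf_abs_le _) (deg_abs_le _) (abs_nonneg _) zero_le_one
          _ = 1 := by norm_num))]
    apply integral_congr_ae (ae_of_all _ _)
    intro y
    rw [show (fun x => bf g (x, y) * deg g y) = fun x => deg g y * bf g (y, x) from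
      funext fun x => by rw [bf_symm hg x y]; exact mul_comm _ _]
    rw [integral_const_mul]
    rfl
  -- step 8 : Jensen
  have hmdeg : m = ∫ x, deg g x ∂ν := by
    rw [hm, ← iint_eq (bf g) (bf_mes hg) bf_abs_le]; rfl
  have idd : Integrable (fun x => deg g x * deg g x) ν :=
    integrable_bdd (mdeg.mul mdeg)
      (fun x => by
        rw [abs_mul]
        calc |deg g x| * |deg g x| ≤ 1 * 1 :=
          mul_le_mul (deg_abs_le _) (deg_abs_le _) (abs_nonneg _) zero_le_one
        _ = 1 := by norm_num)
  have idg : Integrable (deg g) ν := integrable_bdd mdeg deg_abs_le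
  have hJ : m ^ 2 ≤ S := by
    have h0 : 0 ≤ ∫ x, (deg g x - m) ^ 2 ∂ν := integral_nonneg fun x => sq_nonneg _
    have hexp : (∫ x, (deg g x - m) ^ 2 ∂ν)
        = S - 2 * m * (∫ x, deg g x ∂ν) + m ^ 2 := by
      have iB : Integrable (fun x => 2 * m * deg g x) ν := idg.const_mul _
      have iA : Integrable (fun x => deg g x * deg g x - 2 * m * deg g x) ν := by
        exact idd.sub iB
      rw [show (fun x => (deg g x - m) ^ 2)
          = fun x => (deg g x * deg g x - 2 * m * deg g x) + m ^ 2 from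
        funext fun x => by ring]
      rw [integral_add iA (integrable_const _)]
      rw [integral_sub idd iB, integral_const_mul]
      simp [hS]
    rw [hexp, ← hmdeg] at h0
    nlinarith
  have hmnn : 0 ≤ m := integral_nonneg fun p => bf_nonneg p
  -- conclude
  rw [hfst, hsnd] at hI1
  nlinarith

end WithGraphon


-- ### pointwise analytic lemmas

lemma I0_zero : I0 0 = 0 := by simp [I0]

lemma I0_one : I0 1 = 0 := by simp [I0]

lemma I0_mes : Measurable I0 := by
  unfold I0
  exact ((measurable_id.mul Real.measurable_log).add
    ((measurable_const.sub measurable_id).mul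
      (Real.measurable_log.comp (measurable_const.sub measurable_id)))).div_const 2

lemma neg_mul_log_le {u : ℝ} (h0 : 0 ≤ u) (h1 : u ≤ 1) : -(u * Real.log u) ≤ 1 - u := by
  rcases eq_or_lt_of_le h0 with h | h
  · rw [← h]; simp
  · have hl : Real.log u⁻¹ ≤ u⁻¹ - 1 := Real.log_le_sub_one_of_pos (inv_pos.mpr h)
    rw [Real.log_inv] at hl
    have h2 := mul_le_mul_of_nonneg_left hl (le_of_lt h)
    have h3 : u * (u⁻¹ - 1) = 1 - u := by field_simp
    nlinarith

lemma my_mul_log_nonpos {u : ℝ} (h0 : 0 ≤ u) (h1 : u ≤ 1) : u * Real.log u ≤ 0 :=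
  mul_nonpos_of_nonneg_of_nonpos h0 (Real.log_nonpos h0 h1)

lemma I0_abs_le (u : ℝ) (hu : u ∈ Icc (0:ℝ) 1) : |I0 u| ≤ 1 := by
  have h1 := my_mul_log_nonpos hu.1 hu.2
  have h2 := my_mul_log_nonpos (by linarith [hu.2] : (0:ℝ) ≤ 1 - u) (by linarith [hu.1])
  have h3 := neg_mul_log_le hu.1 hu.2
  have h4 := neg_mul_log_le (by linarith [hu.2] : (0:ℝ) ≤ 1 - u) (by linarith [hu.1])
  rw [abs_le, I0]
  constructor <;> [skip; skip] <;> nlinarith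

lemma gibbs_pointwise {u0 : ℝ} (h0 : 0 < u0) (h1 : u0 < 1) {u : ℝ} (hu : u ∈ Icc (0:ℝ) 1) :
    (if 0 < u then (1:ℝ) else 0)
        * ((u * Real.log u0 + (1 - u) * Real.log (1 - u0)) / 2)
      ≤ I0 u := by
  by_cases hpos : 0 < u
  · rw [if_pos hpos, one_mul]
    rcases eq_or_lt_of_le hu.2 with heq | hlt
    · have hlog : Real.log u0 < 0 := Real.log_neg h0 h1
      rw [heq, I0]
      simp only [sub_self, zero_mul, one_mul, Real.log_one, add_zero, mul_zero]
      linarith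
    · have hA : u * Real.log u0 - u * Real.log u ≤ u0 - u := by
        have hd : Real.log (u0 / u) ≤ u0 / u - 1 :=
          Real.log_le_sub_one_of_pos (div_pos h0 hpos)
        rw [Real.log_div (ne_of_gt h0) (ne_of_gt hpos)] at hd
        have h2 := mul_le_mul_of_nonneg_left hd (le_of_lt hpos)
        have h3 : u * (u0 / u - 1) = u0 - u := by field_simp
        nlinarith
      have hB : (1 - u) * Real.log (1 - u0) - (1 - u) * Real.log (1 - u)
          ≤ (1 - u0) - (1 - u) := by
        have hu1 : 0 < 1 - u := by linarith
        have hu01 : 0 < 1 - u0 := by linarith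
        have hd : Real.log ((1 - u0) / (1 - u)) ≤ (1 - u0) / (1 - u) - 1 :=
          Real.log_le_sub_one_of_pos (div_pos hu01 hu1)
        rw [Real.log_div (ne_of_gt hu01) (ne_of_gt hu1)] at hd
        have h2 := mul_le_mul_of_nonneg_left hd (le_of_lt hu1)
        have h3 : (1 - u) * ((1 - u0) / (1 - u) - 1) = (1 - u0) - (1 - u) := by field_simp
        nlinarith
      rw [I0]
      linarith
  · have hu0 : u = 0 := le_antisymm (not_lt.mp hpos) hu.1
    rw [if_neg hpos, zero_mul, hu0, I0_zero]

section Bridge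

variable {g : ℝ → ℝ → ℝ}

lemma edge_eq (hg : IsGraphon g) :
    edgeDensity g = ∫ p, g p.1 p.2 ∂(unitMeasure.prod unitMeasure) := by
  rw [edgeDensity]
  exact iint_eq (fun p => g p.1 p.2) hg.1 (C := 1)
    (fun p => by rw [abs_of_nonneg (hg.2.2 _ _).1]; exact (hg.2.2 _ _).2)

lemma rate_eq (hg : IsGraphon g) :
    rate g = ∫ p, I0 (g p.1 p.2) ∂(unitMeasure.prod unitMeasure) := by
  rw [rate]
  exact iint_eq (fun p => I0 (g p.1 p.2)) (I0_mes.comp hg.1) (C := 1)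
    (fun p => I0_abs_le _ (hg.2.2 _ _))

end Bridge


end AuxProof

/-- if `0 ≤ e ≤ 1/2` and `g` is a graphon with `e(g) = e` and
    `t(g) = 0`, then `I(g) ≥ I₀(2e)/2`. -/
theorem rate_lower_bound_on_flat_scallop (e : ℝ) (he0 : 0 ≤ e) (he : e ≤ 1 / 2)
    (g : ℝ → ℝ → ℝ) (hg : IsGraphon g) (hge : edgeDensity g = e)
    (hgt : triangleDensity g = 0) :
    rate g ≥ I0 (2 * e) / 2 := by
  obtain ⟨hmg, hsym, hrange⟩ := id hg
  have hG : Measurable (fun p : ℝ × ℝ => g p.1 p.2) := hmg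
  have hGb : ∀ p : ℝ × ℝ, |g p.1 p.2| ≤ 1 := fun p => by
    rw [abs_of_nonneg (hrange _ _).1]; exact (hrange _ _).2
  have iG : Integrable (fun p : ℝ × ℝ => g p.1 p.2) (unitMeasure.prod unitMeasure) :=
    integrable_bdd hG hGb
  have hE : ∫ p, g p.1 p.2 ∂(unitMeasure.prod unitMeasure) = e := by
    rw [← edge_eq hg]; exact hge
  have hrate : rate g = ∫ p, I0 (g p.1 p.2) ∂(unitMeasure.prod unitMeasure) := rate_eq hg
  have hm : ∫ p, bf g p ∂(unitMeasure.prod unitMeasure) ≤ 1 / 2 := mantel hg hgt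
  have ibf : Integrable (bf g) (unitMeasure.prod unitMeasure) :=
    integrable_bdd (bf_mes hg) bf_abs_le
  have ibg : Integrable (fun p : ℝ × ℝ => bf g p * g p.1 p.2)
      (unitMeasure.prod unitMeasure) := by
    rw [show (fun p : ℝ × ℝ => bf g p * g p.1 p.2) = fun p : ℝ × ℝ => g p.1 p.2 from
      funext fun p => bf_mul_g hg p]
    exact iG
  have hbg : ∫ p, bf g p * g p.1 p.2 ∂(unitMeasure.prod unitMeasure) = e := by
    rw [show (fun p : ℝ × ℝ => bf g p * g p.1 p.2) = fun p : ℝ × ℝ => g p.1 p.2 from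
      funext fun p => bf_mul_g hg p]
    exact hE
  rcases eq_or_lt_of_le he0 with he0' | hepos
  · -- e = 0 : g vanishes a.e. and the rate is 0
    have hz : (fun p : ℝ × ℝ => g p.1 p.2) =ᵐ[unitMeasure.prod unitMeasure] 0 :=
      (integral_eq_zero_iff_of_nonneg (fun p => (hrange _ _).1) iG).mp
        (by rw [hE, ← he0'])
    have hr0 : rate g = 0 := by
      rw [hrate, show (0:ℝ) = ∫ _p : ℝ × ℝ, (0:ℝ) ∂(unitMeasure.prod unitMeasure) by simp]
      apply integral_congr_ae
      filter_upwards [hz] with p hp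
      have hp' : g p.1 p.2 = 0 := hp
      rw [hp', I0_zero]
    rw [hr0, ← he0']
    norm_num [I0_zero]
  rcases eq_or_lt_of_le he with he' | helt
  · -- e = 1/2 : g coincides a.e. with its 0/1-valued support indicator
    have hle : ∀ p : ℝ × ℝ, 0 ≤ bf g p - g p.1 p.2 := fun p =>
      sub_nonneg.mpr (g_le_bf hg p)
    have hint : ∫ p, (bf g p - g p.1 p.2) ∂(unitMeasure.prod unitMeasure)
        = (∫ p, bf g p ∂(unitMeasure.prod unitMeasure)) - e := by
      rw [integral_sub ibf iG, hE]
    have hneg : ∫ p, (bf g p - g p.1 p.2) ∂(unitMeasure.prod unitMeasure) ≤ 0 := by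
      rw [hint]; rw [he'] at *; linarith
    have hz' : ∫ p, (bf g p - g p.1 p.2) ∂(unitMeasure.prod unitMeasure) = 0 :=
      le_antisymm hneg (integral_nonneg hle)
    have hae : (fun p : ℝ × ℝ => bf g p - g p.1 p.2) =ᵐ[unitMeasure.prod unitMeasure] 0 :=
      (integral_eq_zero_iff_of_nonneg hle (ibf.sub iG)).mp hz'
    have hr0 : rate g = 0 := by
      rw [hrate, show (0:ℝ) = ∫ _p : ℝ × ℝ, (0:ℝ) ∂(unitMeasure.prod unitMeasure) by simp]
      apply integral_congr_ae
      filter_upwards [hae] with p hp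
      have hp0 : bf g p - g p.1 p.2 = 0 := hp
      have hp' : g p.1 p.2 = bf g p := by linarith
      rcases bf_mem (g := g) p with h | h
      · rw [hp', h, I0_zero]
      · rw [hp', h, I0_one]
    rw [hr0, he']
    norm_num [I0_one]
  · -- 0 < e < 1/2 : tangent-line (Gibbs) bound plus Mantel
    have h2e0 : (0:ℝ) < 2 * e := by linarith
    have h2e1 : 2 * e < 1 := by linarith
    have hL1 : Real.log (1 - 2 * e) < 0 := Real.log_neg (by linarith) (by linarith)
    set L0 := Real.log (2 * e) with hL0
    set L1 := Real.log (1 - 2 * e) with hL1def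
    have hpt : ∀ p : ℝ × ℝ,
        bf g p * ((g p.1 p.2 * L0 + (1 - g p.1 p.2) * L1) / 2) ≤ I0 (g p.1 p.2) := fun p =>
      gibbs_pointwise h2e0 h2e1 (hrange p.1 p.2)
    have iI0G : Integrable (fun p : ℝ × ℝ => I0 (g p.1 p.2))
        (unitMeasure.prod unitMeasure) :=
      integrable_bdd (I0_mes.comp hG) (fun p => I0_abs_le _ (hrange _ _))
    have mLHS : Measurable (fun p : ℝ × ℝ =>
        bf g p * ((g p.1 p.2 * L0 + (1 - g p.1 p.2) * L1) / 2)) :=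
      (bf_mes hg).mul
        (((hG.mul measurable_const).add
          ((measurable_const.sub hG).mul measurable_const)).div_const 2)
    have bLHS : ∀ p : ℝ × ℝ,
        |bf g p * ((g p.1 p.2 * L0 + (1 - g p.1 p.2) * L1) / 2)| ≤ (|L0| + |L1|) / 2 := by
      intro p
      have hb := bf_abs_le (g := g) p
      have hg1 := (hrange p.1 p.2).1
      have hg2 := (hrange p.1 p.2).2
      rw [abs_mul, abs_div]
      have habs : |g p.1 p.2 * L0 + (1 - g p.1 p.2) * L1| ≤ |L0| + |L1| := by
        calc |g p.1 p.2 * L0 + (1 - g p.1 p.2) * L1|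
            ≤ |g p.1 p.2 * L0| + |(1 - g p.1 p.2) * L1| := abs_add_le _ _
          _ = |g p.1 p.2| * |L0| + |1 - g p.1 p.2| * |L1| := by rw [abs_mul, abs_mul]
          _ ≤ 1 * |L0| + 1 * |L1| := by
              apply add_le_add
              · exact mul_le_mul_of_nonneg_right (by rw [abs_of_nonneg hg1]; exact hg2)
                  (abs_nonneg _)
              · exact mul_le_mul_of_nonneg_right
                  (by rw [abs_of_nonneg (by linarith : (0:ℝ) ≤ 1 - g p.1 p.2)]; linarith)
                  (abs_nonneg _)
          _ = |L0| + |L1| := by ring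
      calc |bf g p| * (|g p.1 p.2 * L0 + (1 - g p.1 p.2) * L1| / |(2:ℝ)|)
          ≤ 1 * ((|L0| + |L1|) / |(2:ℝ)|) := by
            apply mul_le_mul hb _ (by positivity) zero_le_one
            apply div_le_div_of_nonneg_right habs ?_ |>.trans_eq rfl
            · norm_num
      _ = (|L0| + |L1|) / 2 := by rw [abs_of_nonneg (by norm_num : (0:ℝ) ≤ 2)]; ring
    have iLHS : Integrable (fun p : ℝ × ℝ =>
        bf g p * ((g p.1 p.2 * L0 + (1 - g p.1 p.2) * L1) / 2))
        (unitMeasure.prod unitMeasure) := integrable_bdd mLHS bLHS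
    have hmono : (∫ p, bf g p * ((g p.1 p.2 * L0 + (1 - g p.1 p.2) * L1) / 2)
          ∂(unitMeasure.prod unitMeasure))
        ≤ ∫ p, I0 (g p.1 p.2) ∂(unitMeasure.prod unitMeasure) :=
      integral_mono iLHS iI0G hpt
    have hsplit : (fun p : ℝ × ℝ =>
        bf g p * ((g p.1 p.2 * L0 + (1 - g p.1 p.2) * L1) / 2))
        = fun p : ℝ × ℝ => (L0 / 2) * (bf g p * g p.1 p.2)
            + (L1 / 2) * (bf g p - bf g p * g p.1 p.2) := by
      funext p
      rcases bf_mem (g := g) p with h | h <;> rw [h] <;> ring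
    have hLHS : (∫ p, bf g p * ((g p.1 p.2 * L0 + (1 - g p.1 p.2) * L1) / 2)
          ∂(unitMeasure.prod unitMeasure))
        = (L0 / 2) * e + (L1 / 2)
            * ((∫ p, bf g p ∂(unitMeasure.prod unitMeasure)) - e) := by
      have iSub : Integrable (fun p : ℝ × ℝ => bf g p - bf g p * g p.1 p.2)
          (unitMeasure.prod unitMeasure) := by exact ibf.sub ibg
      have iS2 : Integrable (fun p : ℝ × ℝ => (L1 / 2) * (bf g p - bf g p * g p.1 p.2))
          (unitMeasure.prod unitMeasure) := iSub.const_mul _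
      rw [hsplit]
      rw [integral_add (ibg.const_mul _) iS2]
      rw [integral_const_mul, integral_const_mul, show (∫ p, (bf g p - bf g p * g p.1 p.2) ∂(unitMeasure.prod unitMeasure)) = (∫ p, bf g p ∂(unitMeasure.prod unitMeasure)) - (∫ p, bf g p * g p.1 p.2 ∂(unitMeasure.prod unitMeasure)) from integral_sub ibf ibg, hbg]
    rw [hrate] at *
    rw [hLHS] at hmono
    have hfin : I0 (2 * e) / 2 ≤ (L0 / 2) * e + (L1 / 2)
        * ((∫ p, bf g p ∂(unitMeasure.prod unitMeasure)) - e) := by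
      rw [I0, ← hL0, ← hL1def]
      set m := ∫ p, bf g p ∂(unitMeasure.prod unitMeasure)
      nlinarith [mul_nonneg (le_of_lt (neg_pos.mpr hL1)) (by linarith : (0:ℝ) ≤ 1 - 2 * m)]
    linarith
end

section
/- Let ℓ ≥ 2 be an integer, let e ∈ [1 − 1/ℓ, 1 − 1/(ℓ+1)], let c = (ℓ + √(ℓ(ℓ − e(ℓ+1))))/(ℓ(ℓ+1)), and let p = 4c(1 − ℓc)/(1 − (ℓ−1)c)². Define the graphon g₀ by: g₀(x,y) = 1 if x < kc < y or y < kc < x for some integer k with 1 ≤ k ≤ ℓ−1; g₀(x,y) = p if (ℓ−1)c < x < [1 + (ℓ−1)c]/2 < y or (ℓ−1)c < y < [1 + (ℓ−1)c]/2 < x; and g₀(x,y) = 0 otherwise. Then e(g₀) = e, ∫∫∫_{[(ℓ−1)c,1]³} g₀(x,y) g₀(y,z) g₀(z,x) dx dy dz = 0, and I(g₀) = ((1 − (ℓ−1)c)²/2)·I₀(p). -/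
open MeasureTheory Real Set Filter

lemma step_ae {f : ℝ → ℝ} {u v C : ℝ} (h : ∀ y, u < y → y < v → f y = C) :
    f =ᵐ[volume.restrict (Ioc u v)] fun _ => C := by
  rw [← Measure.restrict_congr_set (Ioo_ae_eq_Ioc (a := u) (b := v))]
  exact (ae_restrict_iff' measurableSet_Ioo).2 (Eventually.of_forall fun y hy => h y hy.1 hy.2)

lemma step_int {f : ℝ → ℝ} {u v C : ℝ} (h : ∀ y, u < y → y < v → f y = C) :
    IntegrableOn f (Ioc u v) :=
  (integrableOn_const measure_Ioc_lt_top.ne).congr (step_ae h).symm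

lemma step_val {f : ℝ → ℝ} {u v C : ℝ} (huv : u ≤ v) (h : ∀ y, u < y → y < v → f y = C) :
    ∫ y in Ioc u v, f y = C * (v - u) := by
  rw [integral_congr_ae (step_ae h), setIntegral_const,
    Real.volume_real_Ioc_of_le huv, smul_eq_mul, mul_comm]

lemma step3 {f : ℝ → ℝ} {t₁ t₂ C₁ C₂ C₃ : ℝ} (h0 : 0 ≤ t₁) (h1 : t₁ ≤ t₂) (h2 : t₂ ≤ 1)
    (e1 : ∀ y, 0 < y → y < t₁ → f y = C₁) (e2 : ∀ y, t₁ < y → y < t₂ → f y = C₂)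
    (e3 : ∀ y, t₂ < y → y < 1 → f y = C₃) :
    ∫ y in Icc (0:ℝ) 1, f y = C₁ * t₁ + C₂ * (t₂ - t₁) + C₃ * (1 - t₂) := by
  have hsplit : Ioc (0:ℝ) 1 = Ioc 0 t₁ ∪ (Ioc t₁ t₂ ∪ Ioc t₂ 1) := by
    rw [Ioc_union_Ioc_eq_Ioc h1 h2, Ioc_union_Ioc_eq_Ioc h0 (h1.trans h2)]
  have hd1 : Disjoint (Ioc (0:ℝ) t₁) (Ioc t₁ t₂ ∪ Ioc t₂ 1) :=
    Disjoint.union_right (Ioc_disjoint_Ioc_of_le le_rfl)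
      ((Ioc_disjoint_Ioc_of_le le_rfl).mono_right (Ioc_subset_Ioc_left h1))
  rw [integral_Icc_eq_integral_Ioc, hsplit,
    setIntegral_union hd1 ((measurableSet_Ioc).union measurableSet_Ioc) (step_int e1)
      ((step_int e2).union (step_int e3)),
    setIntegral_union (Ioc_disjoint_Ioc_of_le le_rfl) measurableSet_Ioc (step_int e2) (step_int e3),
    step_val h0 e1, step_val h1 e2, step_val h2 e3]
  ring

open Classical in
noncomputable def Gaux (ℓ : ℕ) (c v w : ℝ) : ℝ → ℝ → ℝ := fun x y =>
  if ∃ k : ℕ, 1 ≤ k ∧ k ≤ ℓ - 1 ∧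
      ((x < (k : ℝ) * c ∧ (k : ℝ) * c < y) ∨ (y < (k : ℝ) * c ∧ (k : ℝ) * c < x)) then v
  else if (((ℓ : ℝ) - 1) * c < x ∧ x < (1 + ((ℓ : ℝ) - 1) * c) / 2 ∧
            (1 + ((ℓ : ℝ) - 1) * c) / 2 < y) ∨
          (((ℓ : ℝ) - 1) * c < y ∧ y < (1 + ((ℓ : ℝ) - 1) * c) / 2 ∧
            (1 + ((ℓ : ℝ) - 1) * c) / 2 < x) then w
  else 0


open Classical in
/-- The optimizing multipartite graphon on the `ℓ`-th scallop: `1` across the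
    first `ℓ−1` parts, a balanced bipartite block of height `p` in the corner
    `[(ℓ−1)c, 1]²`, and `0` elsewhere. -/
noncomputable def gScallop (ℓ : ℕ) (c p : ℝ) : ℝ → ℝ → ℝ := fun x y =>
  if ∃ k : ℕ, 1 ≤ k ∧ k ≤ ℓ - 1 ∧
      ((x < (k : ℝ) * c ∧ (k : ℝ) * c < y) ∨ (y < (k : ℝ) * c ∧ (k : ℝ) * c < x)) then 1
  else if (((ℓ : ℝ) - 1) * c < x ∧ x < (1 + ((ℓ : ℝ) - 1) * c) / 2 ∧
            (1 + ((ℓ : ℝ) - 1) * c) / 2 < y) ∨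
          (((ℓ : ℝ) - 1) * c < y ∧ y < (1 + ((ℓ : ℝ) - 1) * c) / 2 ∧
            (1 + ((ℓ : ℝ) - 1) * c) / 2 < x) then p
  else 0


lemma master (ℓ : ℕ) (hℓ : 2 ≤ ℓ) (c : ℝ) (hc : 0 < c) (hlc : (ℓ : ℝ) * c ≤ 1) (v w : ℝ) :
    ∫ x in Icc (0:ℝ) 1, ∫ y in Icc (0:ℝ) 1, Gaux ℓ c v w x y
      = v * (1 - c) * (((ℓ:ℝ)-1)*c)
        + (v * (((ℓ:ℝ)-1)*c) + w * (1 - ((ℓ:ℝ)-1)*c)/2) * (1 - ((ℓ:ℝ)-1)*c) := by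
  have hL : (2:ℝ) ≤ (ℓ:ℝ) := by exact_mod_cast hℓ
  set a : ℝ := ((ℓ:ℝ)-1)*c with ha
  set b : ℝ := (1 + a)/2 with hb
  have ha0 : 0 ≤ a := mul_nonneg (by linarith) hc.le
  have ha1 : a ≤ 1 - c := by nlinarith
  have ha1' : a < 1 := by linarith
  have hab : a < b := by rw [hb]; linarith
  have hb1 : b < 1 := by rw [hb]; linarith
  -- cond1 is false when both coordinates exceed... (≥ a)
  have hkca : ∀ k : ℕ, k ≤ ℓ - 1 → (k:ℝ) * c ≤ a := by
    intro k hk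
    have : (k:ℝ) ≤ (ℓ:ℝ) - 1 := by
      have : (k:ℝ) ≤ ((ℓ-1 : ℕ):ℝ) := by exact_mod_cast hk
      rwa [Nat.cast_sub (by omega), Nat.cast_one] at this
    exact mul_le_mul_of_nonneg_right this hc.le
  have hnc1 : ∀ u u' : ℝ, a ≤ u → a ≤ u' →
      ¬ ∃ k : ℕ, 1 ≤ k ∧ k ≤ ℓ - 1 ∧
        ((u < (k : ℝ) * c ∧ (k : ℝ) * c < u') ∨ (u' < (k : ℝ) * c ∧ (k : ℝ) * c < u)) := by
    rintro u u' hu hu' ⟨k, -, hk2, h | h⟩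
    · exact absurd h.1 (not_lt.2 ((hkca k hk2).trans hu))
    · exact absurd h.1 (not_lt.2 ((hkca k hk2).trans hu'))
  -- bad set
  set B : Set ℝ := (⋃ k : ℕ, {(k:ℝ) * c}) ∪ {b} with hB
  have hBnull : volume B = 0 :=
    measure_union_null
      (measure_iUnion_null fun k => measure_singleton _) (measure_singleton b)
  have key : ∀ x ∈ Icc (0:ℝ) 1, x ∉ B →
      (∫ y in Icc (0:ℝ) 1, Gaux ℓ c v w x y)
        = if x < a then v * (1 - c) else v * a + w * (1 - a)/2 := by
    intro x hx hxB
    have hxne : ∀ k : ℕ, x ≠ (k:ℝ) * c := by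
      intro k hk
      exact hxB (Or.inl (mem_iUnion.2 ⟨k, hk⟩))
    have hxb : x ≠ b := fun h => hxB (Or.inr h)
    have hx0 : 0 < x := by
      rcases hx.1.lt_or_eq with h | h
      · exact h
      · exact absurd (by rw [← h]; simp) (hxne 0)
    by_cases hxa : x < a
    · rw [if_pos hxa]
      set j : ℕ := ⌊x / c⌋₊ with hj
      have hj1 : (j:ℝ) * c ≤ x := by
        rw [← le_div_iff₀ hc]; exact Nat.floor_le (div_nonneg hx0.le hc.le)
      have hj1' : (j:ℝ) * c < x := hj1.lt_of_ne (fun h => hxne j h.symm)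
      have hj2 : x < ((j:ℝ) + 1) * c := by
        rw [← div_lt_iff₀ hc]; exact_mod_cast Nat.lt_floor_add_one (x / c)
      have hjl : j + 1 ≤ ℓ - 1 := by
        have : ((j:ℝ)) * c < ((ℓ:ℝ) - 1) * c := lt_of_le_of_lt hj1 hxa
        have hjr : (j:ℝ) < (ℓ:ℝ) - 1 := lt_of_mul_lt_mul_right this hc.le
        have : (j:ℝ) + 1 < (ℓ:ℝ) := by linarith
        have : j + 1 < ℓ := by exact_mod_cast this
        omega
      have hjc1 : ((j:ℝ) + 1) * c ≤ a := by
        have := hkca (j+1) hjl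
        push_cast at this ⊢
        linarith
      refine (step3 (t₁ := (j:ℝ)*c) (t₂ := ((j:ℝ)+1)*c) (C₁ := v) (C₂ := 0) (C₃ := v)
        (mul_nonneg (Nat.cast_nonneg j) hc.le)
        (by nlinarith) (by linarith) ?_ ?_ ?_).trans (by ring)
      · -- y < jc : value v
        intro y hy0 hyj
        have hjpos : 1 ≤ j := by
          by_contra h
          push_neg at h
          interval_cases j
          simp at hyj
          linarith
        refine if_pos ⟨j, hjpos, by omega, Or.inr ⟨hyj, hj1'⟩⟩
      · -- jc < y < (j+1)c : value 0
        intro y hy1 hy2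
        rw [Gaux, if_neg, if_neg]
        · rintro (⟨h1, -, -⟩ | ⟨-, -, h3⟩)
          · exact absurd h1 (not_lt.2 (by linarith [ha, hb]))
          · exact absurd h3 (not_lt.2 (by linarith [ha, hb]))
        · rintro ⟨k, hk1, hk2, ⟨hxk, hky⟩ | ⟨hyk, hkx⟩⟩
          ·
            have : (k:ℝ) < (j:ℝ) + 1 := lt_of_mul_lt_mul_right (lt_trans hky hy2) hc.le
            have hkj : k ≤ j := by exact_mod_cast Nat.lt_add_one_iff.mp (by exact_mod_cast this)
            have : (k:ℝ) * c ≤ (j:ℝ) * c :=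
              mul_le_mul_of_nonneg_right (by exact_mod_cast hkj) hc.le
            linarith
          · have : (k:ℝ) < (j:ℝ) + 1 := lt_of_mul_lt_mul_right (lt_trans hkx hj2) hc.le
            have hkj : k ≤ j := by exact_mod_cast Nat.lt_add_one_iff.mp (by exact_mod_cast this)
            have : (k:ℝ) * c ≤ (j:ℝ) * c :=
              mul_le_mul_of_nonneg_right (by exact_mod_cast hkj) hc.le
            linarith
      · -- (j+1)c < y : value v
        intro y hy1 hy2
        refine if_pos ⟨j+1, by omega, hjl, Or.inl ⟨?_, ?_⟩⟩ <;> push_cast <;> linarith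
    · -- x > a
      push_neg at hxa
      have hxa' : a < x := by
        refine hxa.lt_of_ne' ?_
        have := hxne (ℓ - 1)
        rwa [Nat.cast_sub (by omega), Nat.cast_one, ← ha] at this
      rw [if_neg (not_lt.2 hxa)]
      have hv1 : ∀ y, 0 < y → y < a → Gaux ℓ c v w x y = v := by
        intro y hy0 hya
        refine if_pos ⟨ℓ - 1, by omega, le_refl _, Or.inr ⟨?_, ?_⟩⟩ <;>
          rw [Nat.cast_sub (by omega), Nat.cast_one] <;> [exact hya; exact hxa']
      rcases lt_or_gt_of_ne hxb with hxbl | hxbr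
      · -- a < x < b
        refine (step3 (t₁ := a) (t₂ := b) (C₁ := v) (C₂ := 0) (C₃ := w)
            ha0 hab.le hb1.le hv1 ?_ ?_).trans (by rw [hb]; ring)
        · intro y hy1 hy2
          rw [Gaux, if_neg (hnc1 x y hxa hy1.le), if_neg]
          rintro (⟨-, -, h3⟩ | ⟨-, -, h3⟩) <;> linarith [ha, hb]
        · intro y hy1 hy2
          rw [Gaux, if_neg (hnc1 x y hxa (by linarith)),
            if_pos (Or.inl ⟨hxa', hxbl, hy1⟩)]
      · -- b < x
        refine (step3 (t₁ := a) (t₂ := b) (C₁ := v) (C₂ := w) (C₃ := 0)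
            ha0 hab.le hb1.le hv1 ?_ ?_).trans (by rw [hb]; ring)
        · intro y hy1 hy2
          rw [Gaux, if_neg (hnc1 x y hxa hy1.le), if_pos (Or.inr ⟨hy1, hy2, hxbr⟩)]
        · intro y hy1 hy2
          rw [Gaux, if_neg (hnc1 x y hxa (by linarith)), if_neg]
          rintro (⟨-, h2, -⟩ | ⟨-, h2, -⟩) <;> linarith [ha, hb]
  -- now the outer integral
  have houter : (fun x => ∫ y in Icc (0:ℝ) 1, Gaux ℓ c v w x y)
      =ᵐ[volume.restrict (Icc (0:ℝ) 1)]
      (fun x => if x < a then v * (1 - c) else v * a + w * (1 - a)/2) := by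
    filter_upwards [self_mem_ae_restrict measurableSet_Icc,
      ae_restrict_of_ae (measure_eq_zero_iff_ae_notMem.mp hBnull)] with x hx hxB
    exact key x hx hxB
  rw [integral_congr_ae houter]
  refine (step3 (t₁ := a) (t₂ := a) (C₁ := v * (1 - c)) (C₂ := 0)
      (C₃ := v * a + w * (1 - a)/2) ha0 le_rfl ha1'.le ?_ ?_ ?_).trans (by ring)
  · intro y hy0 hya; rw [if_pos hya]
  · intro y h1 h2; linarith
  · intro y hya hy1; rw [if_neg (not_lt.2 hya.le)]

/-- the explicit graphon `g₀` on the `ℓ`-th scallop has edge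
    density `e`, no triangles in the corner `[(ℓ−1)c,1]³`, and rate
    `((1−(ℓ−1)c)²/2)·I₀(p)`. -/

theorem scallop_minimizer (ℓ : ℕ) (hℓ : 2 ≤ ℓ) (e c p : ℝ)
    (he : e ∈ Icc (1 - 1 / (ℓ : ℝ)) (1 - 1 / ((ℓ : ℝ) + 1)))
    (hc : c = ((ℓ : ℝ) + Real.sqrt ((ℓ : ℝ) * ((ℓ : ℝ) - e * ((ℓ : ℝ) + 1)))) /
      ((ℓ : ℝ) * ((ℓ : ℝ) + 1)))
    (hp : p = 4 * c * (1 - (ℓ : ℝ) * c) / (1 - ((ℓ : ℝ) - 1) * c) ^ 2) :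
    edgeDensity (gScallop ℓ c p) = e ∧
    (∫ x in Icc (((ℓ : ℝ) - 1) * c) 1, ∫ y in Icc (((ℓ : ℝ) - 1) * c) 1,
      ∫ z in Icc (((ℓ : ℝ) - 1) * c) 1,
        gScallop ℓ c p x y * gScallop ℓ c p y z * gScallop ℓ c p z x) = 0 ∧
    rate (gScallop ℓ c p) = (1 - ((ℓ : ℝ) - 1) * c) ^ 2 / 2 * I0 p := by
  obtain ⟨he1, he2⟩ := he
  have hL : (2:ℝ) ≤ (ℓ:ℝ) := by exact_mod_cast hℓ
  have hLpos : (0:ℝ) < (ℓ:ℝ) := by linarith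
  have hD : 0 ≤ (ℓ:ℝ) * ((ℓ:ℝ) - e * ((ℓ:ℝ) + 1)) := by
    have h1 : e * ((ℓ:ℝ) + 1) ≤ (ℓ:ℝ) := by
      have h2 : (1 - 1/((ℓ:ℝ)+1)) * ((ℓ:ℝ)+1) = (ℓ:ℝ) := by field_simp; ring
      nlinarith [he2]
    nlinarith
  set s := Real.sqrt ((ℓ:ℝ) * ((ℓ:ℝ) - e * ((ℓ:ℝ) + 1))) with hs
  have hs0 : 0 ≤ s := Real.sqrt_nonneg _
  have hs2 : s^2 = (ℓ:ℝ) * ((ℓ:ℝ) - e * ((ℓ:ℝ) + 1)) := Real.sq_sqrt hD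
  have hs1 : s ≤ 1 := by
    have hLinv : (ℓ:ℝ) * (1/(ℓ:ℝ)) = 1 := by field_simp
    have he1' := mul_le_mul_of_nonneg_left he1 hLpos.le
    have he1'' : (ℓ:ℝ) - 1 ≤ (ℓ:ℝ) * e := by nlinarith [he1', hLinv]
    have h1 : (ℓ:ℝ) * ((ℓ:ℝ) - e * ((ℓ:ℝ) + 1)) ≤ 1 := by nlinarith [he1'']
    calc s ≤ Real.sqrt 1 := Real.sqrt_le_sqrt h1
    _ = 1 := Real.sqrt_one
  have hc0 : 0 < c := by
    rw [hc]; apply div_pos <;> nlinarith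
  have hlc : (ℓ:ℝ) * c ≤ 1 := by
    rw [hc, ← mul_div_assoc, div_le_one (by nlinarith)]
    nlinarith
  have h1a : (0:ℝ) < 1 - ((ℓ:ℝ) - 1) * c := by nlinarith
  have hp2 : p * (1 - ((ℓ:ℝ) - 1) * c)^2 = 4 * c * (1 - (ℓ:ℝ) * c) := by
    rw [hp]
    field_simp
    exact mul_div_cancel_right₀ _ (ne_of_gt (by linarith))
  have hcc : c * ((ℓ:ℝ) * ((ℓ:ℝ) + 1)) = (ℓ:ℝ) + s := by
    rw [hc]; field_simp
  have hkey : 2 * (ℓ:ℝ) * c - (ℓ:ℝ) * ((ℓ:ℝ) + 1) * c^2 = e := by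
    have hT : (0:ℝ) < (ℓ:ℝ) * ((ℓ:ℝ) + 1) := by nlinarith
    refine mul_left_cancel₀ (ne_of_gt hT) (b := 2 * (ℓ:ℝ) * c - (ℓ:ℝ) * ((ℓ:ℝ) + 1) * c^2) ?_
    linear_combination (2 * (ℓ:ℝ) - c * ((ℓ:ℝ) * ((ℓ:ℝ) + 1)) - ((ℓ:ℝ) + s)) * hcc - hs2
  have hkca : ∀ k : ℕ, k ≤ ℓ - 1 → (k:ℝ) * c ≤ ((ℓ:ℝ) - 1) * c := by
    intro k hk
    have h1 : (k:ℝ) ≤ ((ℓ:ℝ) - 1) := by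
      have : (k:ℝ) ≤ ((ℓ - 1 : ℕ):ℝ) := by exact_mod_cast hk
      rwa [Nat.cast_sub (by omega), Nat.cast_one] at this
    exact mul_le_mul_of_nonneg_right h1 hc0.le
  refine ⟨?_, ?_, ?_⟩
  · rw [edgeDensity, show gScallop ℓ c p = Gaux ℓ c 1 p from rfl,
      master ℓ hℓ c hc0 hlc 1 p]
    linear_combination hkey + hp2 / 2
  · have hbz : ∀ u u' : ℝ, ((ℓ:ℝ) - 1) * c ≤ u → ((ℓ:ℝ) - 1) * c ≤ u' →
        ((u ≤ (1 + ((ℓ:ℝ) - 1) * c) / 2 ∧ u' ≤ (1 + ((ℓ:ℝ) - 1) * c) / 2) ∨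
         ((1 + ((ℓ:ℝ) - 1) * c) / 2 ≤ u ∧ (1 + ((ℓ:ℝ) - 1) * c) / 2 ≤ u')) →
        gScallop ℓ c p u u' = 0 := by
      intro u u' hu hu' hcase
      rw [gScallop, if_neg, if_neg]
      · rintro (⟨-, h2, h3⟩ | ⟨-, h2, h3⟩) <;>
          rcases hcase with ⟨c1, c2⟩ | ⟨c1, c2⟩ <;> linarith
      · rintro ⟨k, -, hk2, ⟨h, -⟩ | ⟨h, -⟩⟩
        · exact absurd h (not_lt.2 ((hkca k hk2).trans hu))
        · exact absurd h (not_lt.2 ((hkca k hk2).trans hu'))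
    refine setIntegral_eq_zero_of_forall_eq_zero fun x hx => ?_
    refine setIntegral_eq_zero_of_forall_eq_zero fun y hy => ?_
    refine setIntegral_eq_zero_of_forall_eq_zero fun z hz => ?_
    rcases le_total x ((1 + ((ℓ:ℝ) - 1) * c) / 2) with hx' | hx'
    · rcases le_total y ((1 + ((ℓ:ℝ) - 1) * c) / 2) with hy' | hy'
      · rw [hbz x y hx.1 hy.1 (Or.inl ⟨hx', hy'⟩), zero_mul, zero_mul]
      · rcases le_total z ((1 + ((ℓ:ℝ) - 1) * c) / 2) with hz' | hz'
        · rw [hbz z x hz.1 hx.1 (Or.inl ⟨hz', hx'⟩), mul_zero]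
        · rw [hbz y z hy.1 hz.1 (Or.inr ⟨hy', hz'⟩), mul_zero, zero_mul]
    · rcases le_total y ((1 + ((ℓ:ℝ) - 1) * c) / 2) with hy' | hy'
      · rcases le_total z ((1 + ((ℓ:ℝ) - 1) * c) / 2) with hz' | hz'
        · rw [hbz y z hy.1 hz.1 (Or.inl ⟨hy', hz'⟩), mul_zero, zero_mul]
        · rw [hbz z x hz.1 hx.1 (Or.inr ⟨hz', hx'⟩), mul_zero]
      · rw [hbz x y hx.1 hy.1 (Or.inr ⟨hx', hy'⟩), zero_mul, zero_mul]
  · have hI : ∀ x y, I0 (gScallop ℓ c p x y) = Gaux ℓ c 0 (I0 p) x y := by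
      intro x y
      rw [gScallop, Gaux]
      split_ifs <;> simp [I0]
    rw [rate]
    simp only [hI]
    rw [master ℓ hℓ c hc0 hlc 0 (I0 p)]
    ring
end

section
/- Let 0 < e < 1/2 and 0 < ε < 2e, and define the graphon g by g(x,y) = 2e − ε if x < 1/2 < y or y < 1/2 < x, and g(x,y) = ε otherwise. Then e(g) = e and t(g) = e³ − (e − ε)³. -/
open MeasureTheory Real Set Filter

/-- The perturbed bipartite graphon: `2e − ε` on `{x < 1/2 < y} ∪ {y < 1/2 < x}`
    and `ε` elsewhere. -/
noncomputable def gEps (e ε : ℝ) : ℝ → ℝ → ℝ := fun x y =>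
  if (x < 1 / 2 ∧ 1 / 2 < y) ∨ (y < 1 / 2 ∧ 1 / 2 < x) then 2 * e - ε else ε

lemma gEps_cross (e ε x y : ℝ) (h : (x < 1/2 ∧ 1/2 < y) ∨ (y < 1/2 ∧ 1/2 < x)) :
    gEps e ε x y = 2 * e - ε := if_pos h

lemma gEps_same (e ε x y : ℝ) (h : ¬((x < 1/2 ∧ 1/2 < y) ∨ (y < 1/2 ∧ 1/2 < x))) :
    gEps e ε x y = ε := if_neg h

lemma half_int (f : ℝ → ℝ) (c d : ℝ) (h1 : ∀ x ∈ Ico (0:ℝ) (1/2), f x = c)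
    (h2 : ∀ x ∈ Ioc (1/2:ℝ) 1, f x = d) :
    ∫ x in Icc (0:ℝ) 1, f x = (c + d) / 2 := by
  have hset : Icc (0:ℝ) 1 = Ico 0 (1/2) ∪ Icc (1/2) 1 :=
    (Ico_union_Icc_eq_Icc (by norm_num) (by norm_num)).symm
  have hi1 : IntegrableOn f (Ico (0:ℝ) (1/2)) := by
    apply ((integrableOn_const_iff (C := c)).mpr (Or.inr (by simp))).congr_fun
      (fun x hx => (h1 x hx).symm) measurableSet_Ico
  have hi2 : IntegrableOn f (Icc (1/2:ℝ) 1) := by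
    rw [integrableOn_Icc_iff_integrableOn_Ioc]
    apply ((integrableOn_const_iff (C := d)).mpr (Or.inr (by simp))).congr_fun
      (fun x hx => (h2 x hx).symm) measurableSet_Ioc
  rw [hset, setIntegral_union (Set.disjoint_left.mpr fun x hx h2 => absurd hx.2 (not_lt.mpr h2.1))
      measurableSet_Icc hi1 hi2,
    integral_Icc_eq_integral_Ioc,
    setIntegral_congr_fun measurableSet_Ico h1,
    setIntegral_congr_fun measurableSet_Ioc h2]
  simp [Real.volume_Ico, Real.volume_Ioc]
  norm_num
  ring

/-- for `0 < e < 1/2` and `0 < ε < 2e`, the perturbed bipartite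
    graphon has edge density `e` and triangle density `e³ − (e − ε)³`. -/
theorem perturbed_bipartite_densities (e ε : ℝ) (he0 : 0 < e) (he : e < 1 / 2)
    (hε0 : 0 < ε) (hε : ε < 2 * e) :
    edgeDensity (gEps e ε) = e ∧ triangleDensity (gEps e ε) = e ^ 3 - (e - ε) ^ 3 := by
  unfold edgeDensity triangleDensity
  have inner_lt : ∀ x : ℝ, x < 1/2 →
      (∫ y in Icc (0:ℝ) 1, gEps e ε x y) = (ε + (2*e-ε)) / 2 := by
    intro x hx
    apply half_int
    · intro y hy; exact gEps_same e ε x y (by rintro (⟨u,v⟩|⟨u,v⟩) <;> linarith [hy.2])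
    · intro y hy; exact gEps_cross e ε x y (Or.inl ⟨hx, hy.1⟩)
  have inner_gt : ∀ x : ℝ, 1/2 < x →
      (∫ y in Icc (0:ℝ) 1, gEps e ε x y) = ((2*e-ε) + ε) / 2 := by
    intro x hx
    apply half_int
    · intro y hy; exact gEps_cross e ε x y (Or.inr ⟨hy.2, hx⟩)
    · intro y hy; exact gEps_same e ε x y (by rintro (⟨u,v⟩|⟨u,v⟩) <;> linarith [hy.1])
  constructor
  · rw [half_int _ _ _ (fun x hx => inner_lt x hx.2) (fun x hx => inner_gt x hx.1)]
    ring
  · have key3 : ∀ x y : ℝ, x ≠ 1/2 → y ≠ 1/2 →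
        (∫ z in Icc (0:ℝ) 1, gEps e ε y z * gEps e ε z x) =
        (if ((y < 1/2) ↔ (x < 1/2)) then ((2*e-ε)^2 + ε^2)/2 else (2*e-ε)*ε) := by
      intro x y hx hy
      rcases lt_or_gt_of_ne hy with hy1 | hy1 <;> rcases lt_or_gt_of_ne hx with hx1 | hx1
      · rw [half_int _ (ε*ε) ((2*e-ε)*(2*e-ε))]
        · rw [if_pos (by constructor <;> intro <;> assumption)]; ring
        · intro z hz
          rw [gEps_same e ε y z (by rintro (⟨u,v⟩|⟨u,v⟩) <;> linarith [hz.2]),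
            gEps_same e ε z x (by rintro (⟨u,v⟩|⟨u,v⟩) <;> linarith [hz.2])]
        · intro z hz
          rw [gEps_cross e ε y z (Or.inl ⟨hy1, hz.1⟩),
            gEps_cross e ε z x (Or.inr ⟨hx1, hz.1⟩)]
      · rw [half_int _ (ε*(2*e-ε)) ((2*e-ε)*ε)]
        · rw [if_neg (by intro h; linarith [h.mp hy1])]; ring
        · intro z hz
          rw [gEps_same e ε y z (by rintro (⟨u,v⟩|⟨u,v⟩) <;> linarith [hz.2]),
            gEps_cross e ε z x (Or.inl ⟨hz.2, hx1⟩)]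
        · intro z hz
          rw [gEps_cross e ε y z (Or.inl ⟨hy1, hz.1⟩),
            gEps_same e ε z x (by rintro (⟨u,v⟩|⟨u,v⟩) <;> linarith [hz.1])]
      · rw [half_int _ ((2*e-ε)*ε) (ε*(2*e-ε))]
        · rw [if_neg (by intro h; linarith [h.mpr hx1])]; ring
        · intro z hz
          rw [gEps_cross e ε y z (Or.inr ⟨hz.2, hy1⟩),
            gEps_same e ε z x (by rintro (⟨u,v⟩|⟨u,v⟩) <;> linarith [hz.2])]
        · intro z hz
          rw [gEps_same e ε y z (by rintro (⟨u,v⟩|⟨u,v⟩) <;> linarith [hz.1]),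
            gEps_cross e ε z x (Or.inr ⟨hx1, hz.1⟩)]
      · rw [half_int _ ((2*e-ε)*(2*e-ε)) (ε*ε)]
        · rw [if_pos (by constructor <;> intro <;> linarith)]; ring
        · intro z hz
          rw [gEps_cross e ε y z (Or.inr ⟨hz.2, hy1⟩),
            gEps_cross e ε z x (Or.inl ⟨hz.2, hx1⟩)]
        · intro z hz
          rw [gEps_same e ε y z (by rintro (⟨u,v⟩|⟨u,v⟩) <;> linarith [hz.1]),
            gEps_same e ε z x (by rintro (⟨u,v⟩|⟨u,v⟩) <;> linarith [hz.1])]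
    have mid : ∀ x : ℝ, x ≠ 1/2 →
        (∫ y in Icc (0:ℝ) 1, ∫ z in Icc (0:ℝ) 1, gEps e ε x y * gEps e ε y z * gEps e ε z x)
        = (3 * (2*e-ε)^2 * ε + ε^3) / 4 := by
      intro x hx
      have hpull : ∀ y : ℝ, (∫ z in Icc (0:ℝ) 1, gEps e ε x y * gEps e ε y z * gEps e ε z x)
          = gEps e ε x y * ∫ z in Icc (0:ℝ) 1, gEps e ε y z * gEps e ε z x := by
        intro y
        rw [← integral_const_mul]
        congr 1; funext z; ring
      rcases lt_or_gt_of_ne hx with hx1 | hx1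
      · rw [half_int _ (ε * (((2*e-ε)^2+ε^2)/2)) ((2*e-ε) * ((2*e-ε)*ε))]
        · ring
        · intro y hy
          rw [hpull, key3 x y hx (ne_of_lt hy.2),
            if_pos (by constructor <;> intro <;> [exact hx1; exact hy.2]),
            gEps_same e ε x y (by rintro (⟨u,v⟩|⟨u,v⟩) <;> linarith [hy.2])]
        · intro y hy
          rw [hpull, key3 x y hx (ne_of_gt hy.1),
            if_neg (by intro h; linarith [h.mpr hx1, hy.1]),
            gEps_cross e ε x y (Or.inl ⟨hx1, hy.1⟩)]
      · rw [half_int _ ((2*e-ε) * ((2*e-ε)*ε)) (ε * (((2*e-ε)^2+ε^2)/2))]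
        · ring
        · intro y hy
          rw [hpull, key3 x y hx (ne_of_lt hy.2),
            if_neg (by intro h; linarith [h.mp hy.2, hx1]),
            gEps_cross e ε x y (Or.inr ⟨hy.2, hx1⟩)]
        · intro y hy
          rw [hpull, key3 x y hx (ne_of_gt hy.1),
            if_pos (by constructor <;> intro <;> linarith [hy.1]),
            gEps_same e ε x y (by rintro (⟨u,v⟩|⟨u,v⟩) <;> linarith [hy.1])]
    rw [half_int _ _ _
        (fun x hx => mid x (ne_of_lt hx.2)) (fun x hx => mid x (ne_of_gt hx.1))]
    ring
end

section
/- Let 0 < e < 1/2 and 0 < ε < e, and define the graphon g by g(x,y) = 2e − ε if x < 1/2 < y or y < 1/2 < x, and g(x,y) = ε otherwise. Define h(x,y) = ∫₀¹ g(x,z) g(y,z) dz and λ₂ = [I₀'(2e−ε) − I₀'(ε)]/(6(e−ε)²), where I₀'(u) = (1/2)[ln u − ln(1−u)]. Then there exists λ₁ ∈ ℝ such that for almost every (x,y) ∈ [0,1]², I₀'(g(x,y)) = −λ₁ − 3λ₂·h(x,y). -/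
open MeasureTheory Real Set Filter

instance : SFinite unitMeasure := by unfold unitMeasure; infer_instance

lemma gval (e ε x z : ℝ) (hx : x ≠ 1/2) (hz : z ≠ 1/2) :
    gEps e ε x z = if ((x < 1/2) ↔ (1/2 < z)) then 2*e-ε else ε := by
  unfold gEps
  rcases hx.lt_or_gt with h1 | h1 <;> rcases hz.lt_or_gt with h2 | h2
  · rw [if_neg (show ¬((x < 1/2 ∧ 1/2 < z) ∨ (z < 1/2 ∧ 1/2 < x)) by
      rintro (⟨_, c⟩ | ⟨_, c⟩); exacts [asymm h2 c, asymm h1 c]),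
      if_neg (show ¬(x < 1/2 ↔ 1/2 < z) from fun h => asymm h2 (h.mp h1))]
  · rw [if_pos (Or.inl ⟨h1, h2⟩), if_pos (iff_of_true h1 h2)]
  · rw [if_pos (Or.inr ⟨h2, h1⟩), if_pos (iff_of_false (asymm h1) (asymm h2))]
  · rw [if_neg (show ¬((x < 1/2 ∧ 1/2 < z) ∨ (z < 1/2 ∧ 1/2 < x)) by
      rintro (⟨c, _⟩ | ⟨c, _⟩); exacts [asymm h1 c, asymm h2 c]),
      if_neg (show ¬(x < 1/2 ↔ 1/2 < z) from fun h => asymm h1 (h.mpr h2))]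

lemma stepInt (c₁ c₂ : ℝ) :
    ∫ z in Icc (0:ℝ) 1, (if z < 1/2 then c₁ else c₂) = (c₁ + c₂) / 2 := by
  have h : Icc (0:ℝ) 1 = Ico 0 (1/2) ∪ Icc (1/2) 1 :=
    (Ico_union_Icc_eq_Icc (by norm_num) (by norm_num)).symm
  have hdisj : Disjoint (Ico (0:ℝ) (1/2)) (Icc (1/2) 1) := by
    rw [Set.disjoint_left]; rintro z hz hz2; exact absurd hz2.1 (not_le.2 hz.2)
  have i1 : IntegrableOn (fun z : ℝ => if z < 1/2 then c₁ else c₂) (Ico (0:ℝ) (1/2)) := by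
    refine (integrableOn_const ?_).congr_fun (fun z hz => (if_pos hz.2).symm)
      measurableSet_Ico
    simp [Real.volume_Ico]
  have i2 : IntegrableOn (fun z : ℝ => if z < 1/2 then c₁ else c₂) (Icc (1/2:ℝ) 1) := by
    refine (integrableOn_const ?_).congr_fun
      (fun z hz => (if_neg (not_lt.2 hz.1)).symm) measurableSet_Icc
    simp [Real.volume_Icc]
  rw [h, setIntegral_union hdisj measurableSet_Icc i1 i2,
    setIntegral_congr_fun measurableSet_Ico (fun z hz => if_pos hz.2),
    setIntegral_congr_fun measurableSet_Icc (fun z (hz : z ∈ Icc (1/2:ℝ) 1) =>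
      if_neg (not_lt.2 hz.1)),
    setIntegral_const, setIntegral_const, Real.volume_real_Ico, Real.volume_real_Icc]
  norm_num
  ring

lemma hInt (e ε x y : ℝ) (hx : x ≠ 1/2) (hy : y ≠ 1/2) :
    ∫ z in Icc (0:ℝ) 1, gEps e ε x z * gEps e ε y z =
      ((if x < 1/2 then ε else 2*e-ε) * (if y < 1/2 then ε else 2*e-ε)
       + (if x < 1/2 then 2*e-ε else ε) * (if y < 1/2 then 2*e-ε else ε)) / 2 := by
  rw [← stepInt]
  refine integral_congr_ae ?_
  have hz : ∀ᵐ z ∂(volume.restrict (Icc (0:ℝ) 1)), z ≠ 1/2 := by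
    refine ae_restrict_of_ae ?_
    rw [ae_iff]
    have : {z : ℝ | ¬ z ≠ 1/2} = {1/2} := by ext z; simp
    rw [this]; exact measure_singleton _
  filter_upwards [hz] with z hz1
  rw [gval e ε x z hx hz1, gval e ε y z hy hz1]
  rcases hz1.lt_or_gt with h2 | h2
  · have hz' : ¬ ((1:ℝ)/2 < z) := asymm h2
    by_cases hX : x < 1/2 <;> by_cases hY : y < 1/2
    · simp only [if_pos h2, if_pos hX, if_pos hY,
        if_neg (show ¬(x < 1/2 ↔ 1/2 < z) from fun i => hz' (i.mp hX)),
        if_neg (show ¬(y < 1/2 ↔ 1/2 < z) from fun i => hz' (i.mp hY))]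
    · simp only [if_pos h2, if_pos hX, if_neg hY,
        if_neg (show ¬(x < 1/2 ↔ 1/2 < z) from fun i => hz' (i.mp hX)),
        if_pos (iff_of_false hY hz')]
    · simp only [if_pos h2, if_neg hX, if_pos hY,
        if_pos (iff_of_false hX hz'),
        if_neg (show ¬(y < 1/2 ↔ 1/2 < z) from fun i => hz' (i.mp hY))]
    · simp only [if_pos h2, if_neg hX, if_neg hY,
        if_pos (iff_of_false hX hz'), if_pos (iff_of_false hY hz')]
  · have hz' : ¬ (z < (1:ℝ)/2) := asymm h2
    by_cases hX : x < 1/2 <;> by_cases hY : y < 1/2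
    · simp only [if_neg hz', if_pos hX, if_pos hY,
        if_pos (iff_of_true hX h2), if_pos (iff_of_true hY h2)]
    · simp only [if_neg hz', if_pos hX, if_neg hY,
        if_pos (iff_of_true hX h2),
        if_neg (show ¬(y < 1/2 ↔ 1/2 < z) from fun i => hY (i.mpr h2))]
    · simp only [if_neg hz', if_neg hX, if_pos hY,
        if_neg (show ¬(x < 1/2 ↔ 1/2 < z) from fun i => hX (i.mpr h2)),
        if_pos (iff_of_true hY h2)]
    · simp only [if_neg hz', if_neg hX, if_neg hY,
        if_neg (show ¬(x < 1/2 ↔ 1/2 < z) from fun i => hX (i.mpr h2)),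
        if_neg (show ¬(y < 1/2 ↔ 1/2 < z) from fun i => hY (i.mpr h2))]

/-- the perturbed bipartite graphon satisfies the Euler–Lagrange
    equation `I₀'(g(x,y)) = −λ₁ − 3λ₂ h(x,y)` a.e., where
    `h(x,y) = ∫₀¹ g(x,z)g(y,z) dz` and `λ₂ = [I₀'(2e−ε) − I₀'(ε)]/(6(e−ε)²)`. -/
theorem perturbed_bipartite_euler_lagrange (e ε : ℝ) (he0 : 0 < e) (he : e < 1 / 2)
    (hε0 : 0 < ε) (hε : ε < e) :
    ∃ lam₁ : ℝ, ∀ᵐ q ∂(unitMeasure.prod unitMeasure),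
      I0d (gEps e ε q.1 q.2) = -lam₁ -
        3 * ((I0d (2 * e - ε) - I0d ε) / (6 * (e - ε) ^ 2)) *
          (∫ z in Icc (0 : ℝ) 1, gEps e ε q.1 z * gEps e ε q.2 z) := by
  refine ⟨-(I0d (2*e-ε)) - 3*((I0d (2*e-ε) - I0d ε)/(6*(e-ε)^2))*((2*e-ε)*ε), ?_⟩
  have key : ∀ᵐ q ∂(unitMeasure.prod unitMeasure), q.1 ≠ (1/2:ℝ) ∧ q.2 ≠ (1/2:ℝ) := by
    rw [ae_iff]
    have h0 : unitMeasure {(1/2:ℝ)} = 0 := by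
      unfold unitMeasure
      rw [Measure.restrict_apply (measurableSet_singleton _)]
      exact measure_mono_null inter_subset_left (measure_singleton _)
    have hsub : {q : ℝ × ℝ | ¬(q.1 ≠ (1/2:ℝ) ∧ q.2 ≠ (1/2:ℝ))} ⊆
        (({(1/2:ℝ)} ×ˢ (univ : Set ℝ)) ∪ ((univ : Set ℝ) ×ˢ {(1/2:ℝ)})) := by
      intro q hq
      rw [mem_setOf_eq, not_and_or, not_ne_iff, not_ne_iff] at hq
      rcases hq with h | h
      · exact Or.inl ⟨mem_singleton_iff.mpr h, mem_univ _⟩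
      · exact Or.inr ⟨mem_univ _, mem_singleton_iff.mpr h⟩
    refine measure_mono_null hsub ?_
    refine le_antisymm (le_trans (measure_union_le _ _) ?_) (zero_le)
    rw [Measure.prod_prod, Measure.prod_prod, h0]
    simp
  filter_upwards [key] with q hq
  obtain ⟨hx, hy⟩ := hq
  rw [show (∫ z in Icc (0:ℝ) 1, gEps e ε q.1 z * gEps e ε q.2 z) = _ from hInt e ε q.1 q.2 hx hy,
    gval e ε q.1 q.2 hx hy]
  have hne : e - ε ≠ 0 := ne_of_gt (sub_pos.2 hε)
  by_cases hX : q.1 < 1/2 <;> by_cases hY : q.2 < 1/2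
  · simp only [if_pos hX, if_pos hY,
      if_neg (show ¬(q.1 < 1/2 ↔ 1/2 < q.2) from fun i => asymm hY (i.mp hX))]
    field_simp
    ring
  · have h1 : (1:ℝ)/2 < q.2 := lt_of_le_of_ne (not_lt.1 hY) (Ne.symm hy)
    simp only [if_pos hX, if_neg hY, if_pos (iff_of_true hX h1)]
    ring
  · simp only [if_neg hX, if_pos hY, if_pos (iff_of_false hX (asymm hY))]
    ring
  · have h1 : (1:ℝ)/2 < q.2 := lt_of_le_of_ne (not_lt.1 hY) (Ne.symm hy)
    simp only [if_neg hX, if_neg hY,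
      if_neg (show ¬(q.1 < 1/2 ↔ 1/2 < q.2) from fun i => hX (i.mpr h1))]
    field_simp
    ring
end
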